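/- With Q(ρ) = h h^H − (2^ρ − 1) M for Hermitian positive definite M and ρ ≥ 0, the largest eigenvalue of Q(ρ) is a nonincreasing function of ρ, and there exists ρ_max ≥ 0 such that a unit vector v with v^H Q(ρ) v = 0 exists if and only if 0 ≤ ρ ≤ ρ_max; moreover ρ_max = log2(1 + h^H M^{-1} h). -/

import Mathlib

open Matrix ComplexOrder
open Complex

/-- conjugate-symmetry of a Hermitian quadratic form. -/
lemma herm_symm {n : ℕ} {A : Matrix (Fin n) (Fin n) ℂ} (hA : A.IsHermitian)
    (a b : Fin n → ℂ) : star (star a ⬝ᵥ A *ᵥ b) = star b ⬝ᵥ A *ᵥ a := by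
  rw [star_dotProduct, star_star, star_mulVec, hA.eq, dotProduct_mulVec]

lemma herm_form_real {n : ℕ} {A : Matrix (Fin n) (Fin n) ℂ} (hA : A.IsHermitian)
    (a : Fin n → ℂ) : (star a ⬝ᵥ A *ᵥ a) = (((star a ⬝ᵥ A *ᵥ a).re : ℝ) : ℂ) := by
  have h1 := herm_symm hA a a
  have h2 : (starRingEnd ℂ) (star a ⬝ᵥ A *ᵥ a) = star a ⬝ᵥ A *ᵥ a := h1
  have := Complex.conj_eq_iff_re.mp h2
  exact this.symm

lemma self_dot_real {n : ℕ} (u : Fin n → ℂ) :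
    star u ⬝ᵥ u = (((star u ⬝ᵥ u).re : ℝ) : ℂ) := by
  have : (0:ℂ) ≤ star u ⬝ᵥ u := dotProduct_star_self_nonneg u
  rw [Complex.le_def] at this
  exact Complex.ext rfl (by simpa using this.2.symm)

lemma self_dot_pos {n : ℕ} {u : Fin n → ℂ} (hu : u ≠ 0) :
    0 < (star u ⬝ᵥ u).re := by
  have : (0:ℂ) < star u ⬝ᵥ u := Matrix.dotProduct_star_self_pos_iff.mpr hu
  rw [Complex.lt_def] at this
  simpa using this.1

/-- The largest eigenvalue of a Hermitian matrix. -/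
noncomputable def maxEig {n : ℕ} {A : Matrix (Fin n) (Fin n) ℂ} (hA : A.IsHermitian) : ℝ :=
  ⨆ i, hA.eigenvalues i

lemma eig_le_maxEig {n : ℕ} (hn : 0 < n) {A : Matrix (Fin n) (Fin n) ℂ}
    (hA : A.IsHermitian) (i : Fin n) : hA.eigenvalues i ≤ maxEig hA := by
  haveI : Nonempty (Fin n) := Fin.pos_iff_nonempty.mp hn
  exact le_ciSup (Set.Finite.bddAbove (Set.finite_range _)) i

lemma rayleigh_le {n : ℕ} (hn : 0 < n) {A : Matrix (Fin n) (Fin n) ℂ} (hA : A.IsHermitian)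
    {v : Fin n → ℂ} (hv : star v ⬝ᵥ v = 1) :
    (star v ⬝ᵥ A *ᵥ v).re ≤ maxEig hA := by
  haveI : Nonempty (Fin n) := Fin.pos_iff_nonempty.mp hn
  set U : Matrix (Fin n) (Fin n) ℂ := (hA.eigenvectorUnitary : Matrix (Fin n) (Fin n) ℂ) with hU
  set u : Fin n → ℂ := star U *ᵥ v with hu
  have hstaru : star u = star v ᵥ* U := by
    rw [hu, star_mulVec, star_eq_conjTranspose, conjTranspose_conjTranspose]
  have hUU : U * star U = 1 := Unitary.mul_star_self_of_mem hA.eigenvectorUnitary.2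
  have huu : star u ⬝ᵥ u = 1 := by
    rw [hstaru, hu, ← dotProduct_mulVec, mulVec_mulVec, hUU, one_mulVec, hv]
  have key : star v ⬝ᵥ A *ᵥ v
      = star u ⬝ᵥ (diagonal (RCLike.ofReal ∘ hA.eigenvalues) : Matrix (Fin n) (Fin n) ℂ) *ᵥ u := by
    conv_lhs => rw [hA.spectral_theorem, Unitary.conjStarAlgAut_apply]
    rw [← hU, ← mulVec_mulVec, ← mulVec_mulVec, dotProduct_mulVec, ← hstaru, ← hu]
  have hexp : star u ⬝ᵥ (diagonal (RCLike.ofReal ∘ hA.eigenvalues) : Matrix (Fin n) (Fin n) ℂ) *ᵥ u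
      = ∑ i, ((hA.eigenvalues i : ℝ) : ℂ) * ((normSq (u i) : ℝ) : ℂ) := by
    simp only [dotProduct, mulVec_diagonal, Function.comp_apply, Pi.star_apply, RCLike.ofReal_alg]
    refine Finset.sum_congr rfl fun i _ => ?_
    rw [Complex.star_def, Complex.real_smul, mul_one, mul_left_comm,
      ← Complex.normSq_eq_conj_mul_self]
  have hsumsq : ∑ i, normSq (u i) = 1 := by
    have : star u ⬝ᵥ u = ∑ i, ((normSq (u i) : ℝ) : ℂ) := by
      simp only [dotProduct, Pi.star_apply]
      exact Finset.sum_congr rfl fun i _ => by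
        rw [Complex.star_def, ← Complex.normSq_eq_conj_mul_self]
    rw [huu] at this
    have := congrArg Complex.re this.symm
    simpa using this
  rw [key, hexp]
  have : (∑ i, ((hA.eigenvalues i : ℝ) : ℂ) * ((normSq (u i) : ℝ) : ℂ)).re
      = ∑ i, hA.eigenvalues i * normSq (u i) := by
    push_cast
    simp
  rw [this]
  calc ∑ i, hA.eigenvalues i * normSq (u i)
      ≤ ∑ i, maxEig hA * normSq (u i) := by
        refine Finset.sum_le_sum fun i _ => ?_
        exact mul_le_mul_of_nonneg_right (eig_le_maxEig hn hA i) (normSq_nonneg _)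
    _ = maxEig hA := by rw [← Finset.mul_sum, hsumsq, mul_one]

lemma vecMulVec_mulVec' {n : ℕ} (h k x : Fin n → ℂ) :
    vecMulVec h k *ᵥ x = (k ⬝ᵥ x) • h := by
  ext i
  simp only [mulVec, dotProduct, vecMulVec_apply, Pi.smul_apply, smul_eq_mul, Finset.sum_mul]
  exact Finset.sum_congr rfl fun j _ => by ring

lemma form_eq {n : ℕ} (h x : Fin n → ℂ) (M : Matrix (Fin n) (Fin n) ℂ) (t : ℝ) :
    star x ⬝ᵥ (vecMulVec h (star h) - ((t : ℝ) : ℂ) • M) *ᵥ x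
      = ((normSq (star h ⬝ᵥ x) : ℝ) : ℂ) - ((t : ℝ) : ℂ) * (star x ⬝ᵥ M *ᵥ x) := by
  rw [sub_mulVec, dotProduct_sub, vecMulVec_mulVec', dotProduct_smul, smul_eq_mul,
    smul_mulVec, dotProduct_smul, smul_eq_mul]
  congr 1
  have : star x ⬝ᵥ h = star (star h ⬝ᵥ x) := by rw [star_dotProduct]
  rw [this, Complex.star_def, Complex.mul_conj]

lemma cauchy_schwarz_M {n : ℕ} (h x : Fin n → ℂ) {M : Matrix (Fin n) (Fin n) ℂ}
    (hM : M.PosDef) :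
    normSq (star h ⬝ᵥ x) ≤ (star h ⬝ᵥ M⁻¹ *ᵥ h).re * (star x ⬝ᵥ M *ᵥ x).re := by
  by_cases hh : h = 0
  · subst hh
    simp [dotProduct]
  have hMinv : M⁻¹.PosDef := hM.inv
  have hdet : IsUnit M.det := (Matrix.isUnit_iff_isUnit_det M).mp hM.isUnit
  have hMM : M * M⁻¹ = 1 := Matrix.mul_nonsing_inv M hdet
  have hM'M : M⁻¹ * M = 1 := Matrix.nonsing_inv_mul M hdet
  set w : Fin n → ℂ := M⁻¹ *ᵥ h with hw
  set s : ℂ := star h ⬝ᵥ x with hs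
  set c : ℂ := star h ⬝ᵥ w with hc
  -- star w ᵥ* M = star h
  have hwM : star w ᵥ* M = star h := by
    rw [hw, star_mulVec, hMinv.isHermitian.eq, vecMul_vecMul, hM'M, vecMul_one]
  have h1 : star w ⬝ᵥ M *ᵥ x = s := by rw [dotProduct_mulVec, hwM]
  have h2 : star w ⬝ᵥ M *ᵥ w = c := by rw [dotProduct_mulVec, hwM]
  have h3 : star x ⬝ᵥ M *ᵥ w = star s := by rw [← herm_symm hM.isHermitian w x, h1]
  have hcre : c = ((c.re : ℝ) : ℂ) := by
    rw [hc, hw]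
    exact herm_form_real hMinv.isHermitian h
  have hcpos : 0 < c.re := by
    have : (0:ℂ) < star h ⬝ᵥ M⁻¹ *ᵥ h := hMinv.dotProduct_mulVec_pos hh
    rw [Complex.lt_def] at this
    simpa [hc, hw] using this.1
  set cr : ℝ := c.re with hcr
  set z : Fin n → ℂ := ((cr : ℝ) : ℂ) • x - s • w with hz
  have hstarz : star z = ((cr : ℝ) : ℂ) • star x - star s • star w := by
    rw [hz, star_sub, star_smul, star_smul]
    norm_num
  have hE : star z ⬝ᵥ M *ᵥ z
      = ((cr:ℝ):ℂ)^2 * (star x ⬝ᵥ M *ᵥ x) - ((cr:ℝ):ℂ) * ((normSq s : ℝ) : ℂ) := by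
    have hss : s * star s = ((normSq s : ℝ) : ℂ) := by
      rw [Complex.star_def, Complex.mul_conj]
    have hss' : star s * s = ((normSq s : ℝ) : ℂ) := by
      rw [Complex.star_def, ← Complex.normSq_eq_conj_mul_self]
    rw [hstarz]
    simp only [hz, hstarz, mulVec_sub, mulVec_smul, sub_dotProduct, dotProduct_sub,
      smul_dotProduct, dotProduct_smul, smul_eq_mul]
    rw [h1, h2, h3, hcre, hss']
    ring
  have hre : 0 ≤ (star z ⬝ᵥ M *ᵥ z).re := by
    have := hM.posSemidef.re_dotProduct_nonneg z
    simpa using this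
  rw [hE] at hre
  have : cr^2 * (star x ⬝ᵥ M *ᵥ x).re - cr * normSq s
      = (((cr:ℝ):ℂ)^2 * (star x ⬝ᵥ M *ᵥ x) - ((cr:ℝ):ℂ) * ((normSq s : ℝ) : ℂ)).re := by
    rw [show (((cr:ℝ):ℂ))^2 = (((cr^2 : ℝ)):ℂ) by push_cast; ring]
    rw [Complex.sub_re, Complex.re_ofReal_mul, Complex.re_ofReal_mul]
    simp
  rw [← this] at hre
  have hkey : cr * normSq s ≤ cr * (cr * (star x ⬝ᵥ M *ᵥ x).re) := by nlinarith
  have := (mul_le_mul_iff_right₀ hcpos).mp hkey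
  calc normSq s ≤ cr * (star x ⬝ᵥ M *ᵥ x).re := this
    _ = (star h ⬝ᵥ M⁻¹ *ᵥ h).re * (star x ⬝ᵥ M *ᵥ x).re := by rw [hcr, hc, hw]

/-- With `Q(ρ) = h hᴴ − (2^ρ − 1) M` for `M ≻ 0`, the largest eigenvalue of `Q(ρ)` is
nonincreasing in `ρ`, and a unit vector `v` with `vᴴ Q(ρ) v = 0` exists iff
`0 ≤ ρ ≤ ρ_max = log₂(1 + hᴴ M⁻¹ h)`. -/
theorem feasibility_interval_rho {n : ℕ} (hn : 2 ≤ n) (h : Fin n → ℂ)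
    (M : Matrix (Fin n) (Fin n) ℂ) (hM : M.PosDef)
    (Q : ℝ → Matrix (Fin n) (Fin n) ℂ)
    (hQ : ∀ ρ, Q ρ = Matrix.vecMulVec h (star h) - ((2 ^ ρ - 1 : ℝ) : ℂ) • M)
    (hQH : ∀ ρ, (Q ρ).IsHermitian) :
    (∀ ρ₁ ρ₂ : ℝ, 0 ≤ ρ₁ → ρ₁ ≤ ρ₂ → maxEig (hQH ρ₂) ≤ maxEig (hQH ρ₁)) ∧
      ∃ ρmax : ℝ, 0 ≤ ρmax ∧
        ρmax = Real.logb 2 (1 + (star h ⬝ᵥ M⁻¹.mulVec h).re) ∧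
        ∀ ρ : ℝ, 0 ≤ ρ →
          ((∃ v : Fin n → ℂ, star v ⬝ᵥ v = 1 ∧ star v ⬝ᵥ (Q ρ).mulVec v = 0) ↔ ρ ≤ ρmax) := by
  have h0n : 0 < n := by omega
  haveI : Nonempty (Fin n) := Fin.pos_iff_nonempty.mp h0n
  have hMinv : M⁻¹.PosDef := hM.inv
  set cC : ℂ := star h ⬝ᵥ M⁻¹ *ᵥ h with hcC
  set c : ℝ := cC.re with hc
  have hcreal : cC = ((c : ℝ) : ℂ) := herm_form_real hMinv.isHermitian h
  have hc0 : 0 ≤ c := by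
    have := hMinv.posSemidef.re_dotProduct_nonneg h
    simpa [hc, hcC] using this
  -- re of the quadratic form of Q ρ
  have hform : ∀ (ρ : ℝ) (x : Fin n → ℂ), (star x ⬝ᵥ (Q ρ) *ᵥ x).re
      = normSq (star h ⬝ᵥ x) - (2 ^ ρ - 1) * (star x ⬝ᵥ M *ᵥ x).re := by
    intro ρ x
    rw [hQ ρ, form_eq h x M (2 ^ ρ - 1), Complex.sub_re, Complex.ofReal_re,
      Complex.re_ofReal_mul]
  constructor
  · -- monotonicity
    intro ρ₁ ρ₂ hρ₁ h12
    apply ciSup_le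
    intro i
    set e : Fin n → ℂ := ⇑((hQH ρ₂).eigenvectorBasis i) with he
    have heunit : star e ⬝ᵥ e = 1 := by
      have := (orthonormal_iff_ite.mp (hQH ρ₂).eigenvectorBasis.orthonormal) i i
      simp only [if_pos rfl] at this
      rw [EuclideanSpace.inner_eq_star_dotProduct] at this
      rw [dotProduct_comm] at this
      simpa using this
    have h1 : (hQH ρ₂).eigenvalues i = (star e ⬝ᵥ (Q ρ₂) *ᵥ e).re := by
      have := (hQH ρ₂).eigenvalues_eq i
      simpa using this
    have hMe : 0 ≤ (star e ⬝ᵥ M *ᵥ e).re := by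
      have := hM.posSemidef.re_dotProduct_nonneg e
      simpa using this
    have hpow : (2:ℝ) ^ ρ₁ ≤ (2:ℝ) ^ ρ₂ := by
      exact (Real.rpow_le_rpow_left_iff one_lt_two).mpr h12
    have h2 : (star e ⬝ᵥ (Q ρ₂) *ᵥ e).re ≤ (star e ⬝ᵥ (Q ρ₁) *ᵥ e).re := by
      rw [hform ρ₁ e, hform ρ₂ e]
      nlinarith
    have h3 : (star e ⬝ᵥ (Q ρ₁) *ᵥ e).re ≤ maxEig (hQH ρ₁) := rayleigh_le h0n _ heunit
    rw [h1]
    exact h2.trans h3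
  · refine ⟨Real.logb 2 (1 + c), Real.logb_nonneg one_lt_two (by linarith), rfl, ?_⟩
    intro ρ hρ
    set t : ℝ := 2 ^ ρ - 1 with htdef
    have ht0 : 0 ≤ t := by
      have : (2:ℝ) ^ (0:ℝ) ≤ (2:ℝ) ^ ρ := (Real.rpow_le_rpow_left_iff one_lt_two).mpr hρ
      rw [Real.rpow_zero] at this
      simp only [htdef]
      linarith
    have hiff : ρ ≤ Real.logb 2 (1 + c) ↔ t ≤ c := by
      rw [Real.le_logb_iff_rpow_le one_lt_two (by linarith)]
      constructor <;> intro hh <;> [skip; skip] <;> simp only [htdef] at * <;> linarith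
    rw [hiff]
    constructor
    · rintro ⟨v, hv1, hv0⟩
      have hvne : v ≠ 0 := by
        intro h0
        rw [h0] at hv1
        simp at hv1
      have hXpos : 0 < (star v ⬝ᵥ M *ᵥ v).re := by
        have := (Complex.lt_def.mp (hM.dotProduct_mulVec_pos hvne)).1
        simpa using this
      have hre : normSq (star h ⬝ᵥ v) - t * (star v ⬝ᵥ M *ᵥ v).re = 0 := by
        have := congrArg Complex.re hv0
        rw [hform ρ v] at this
        simpa [htdef] using this
      have hCS : normSq (star h ⬝ᵥ v) ≤ c * (star v ⬝ᵥ M *ᵥ v).re := by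
        have := cauchy_schwarz_M h v hM
        simpa [hc, hcC] using this
      nlinarith
    · intro htc
      by_cases hh : h = 0
      · have hc0' : c = 0 := by simp [hc, hcC, hh, dotProduct]
        have ht : t = 0 := le_antisymm (hc0' ▸ htc) ht0
        refine ⟨Pi.single (⟨0, h0n⟩ : Fin n) 1, ?_, ?_⟩
        · simp [dotProduct, Pi.single_apply, apply_ite]
        · rw [herm_form_real (hQH ρ)]
          have : (star (Pi.single (⟨0, h0n⟩ : Fin n) (1:ℂ)) ⬝ᵥ (Q ρ) *ᵥ
              Pi.single (⟨0, h0n⟩ : Fin n) 1).re = 0 := by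
            rw [hform ρ]
            simp only [hh]
            simp [dotProduct, ← htdef, ht]
          rw [this]
          simp
      · obtain ⟨j, hj⟩ := Function.ne_iff.mp hh
        obtain ⟨k, hk⟩ := Fintype.exists_ne_of_one_lt_card (by simp; omega) j
        set w₁ : Fin n → ℂ := star (h k) • (Pi.single j 1 : Fin n → ℂ) - star (h j) • (Pi.single k 1 : Fin n → ℂ) with hw₁
        have hw₁h : star h ⬝ᵥ w₁ = 0 := by
          simp only [hw₁, dotProduct_sub, dotProduct_smul, dotProduct_single, smul_eq_mul,
            Pi.star_apply, mul_one]
          ring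
        have hw₁k : w₁ k = -star (h j) := by
          simp [hw₁, Pi.single_eq_of_ne hk]
        have hw₁0 : w₁ ≠ 0 := by
          intro h0
          apply hj
          have h1 : -star (h j) = 0 := by rw [← hw₁k, h0]; rfl
          rw [neg_eq_zero, star_eq_zero] at h1
          exact h1
        set v₀ : Fin n → ℂ := M⁻¹ *ᵥ h with hv₀
        have hdet : IsUnit M.det := (Matrix.isUnit_iff_isUnit_det M).mp hM.isUnit
        have hv₀M : star v₀ ᵥ* M = star h := by
          rw [hv₀, star_mulVec, hMinv.isHermitian.eq, vecMul_vecMul,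
            Matrix.nonsing_inv_mul M hdet, vecMul_one]
        have hhv₀ : star h ⬝ᵥ v₀ = cC := by rw [hv₀, hcC]
        have hv₀Mv₀ : star v₀ ⬝ᵥ M *ᵥ v₀ = cC := by rw [dotProduct_mulVec, hv₀M, hhv₀]
        have hcpos : 0 < c := by
          have := (Complex.lt_def.mp (hMinv.dotProduct_mulVec_pos hh)).1
          simpa [hc, hcC] using this
        set d : Fin n → ℂ := v₀ - w₁ with hd
        set A : Matrix (Fin n) (Fin n) ℂ := Q ρ with hA
        have hg : ∀ τ : ℝ, star (w₁ + (τ:ℂ) • d) ⬝ᵥ A *ᵥ (w₁ + (τ:ℂ) • d)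
            = star w₁ ⬝ᵥ A *ᵥ w₁ + (τ:ℂ) * (star w₁ ⬝ᵥ A *ᵥ d + star d ⬝ᵥ A *ᵥ w₁)
              + (τ:ℂ)^2 * (star d ⬝ᵥ A *ᵥ d) := by
          intro τ
          have hstar : star (w₁ + (τ:ℂ) • d) = star w₁ + (τ:ℂ) • star d := by
            rw [star_add, star_smul]
            simp [Complex.star_def, Complex.conj_ofReal]
          rw [hstar]
          simp only [mulVec_add, mulVec_smul, add_dotProduct, smul_dotProduct,
            dotProduct_add, dotProduct_smul, smul_eq_mul]
          ring
        set fr : ℝ → ℝ := fun τ => (star w₁ ⬝ᵥ A *ᵥ w₁).re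
            + τ * (star w₁ ⬝ᵥ A *ᵥ d + star d ⬝ᵥ A *ᵥ w₁).re
            + τ^2 * (star d ⬝ᵥ A *ᵥ d).re with hfr
        have hfr_eq : ∀ τ : ℝ, fr τ = (star (w₁ + (τ:ℂ) • d) ⬝ᵥ A *ᵥ (w₁ + (τ:ℂ) • d)).re := by
          intro τ
          rw [hg τ]
          simp [hfr, Complex.add_re, Complex.re_ofReal_mul, ← Complex.ofReal_pow]
        have hcont : Continuous fr := by
          rw [hfr]
          fun_prop
        have hMw₁ : 0 ≤ (star w₁ ⬝ᵥ M *ᵥ w₁).re := by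
          have := hM.posSemidef.re_dotProduct_nonneg w₁
          simpa using this
        have hfr0 : fr 0 ≤ 0 := by
          rw [hfr_eq 0]
          simp only [Complex.ofReal_zero, zero_smul, add_zero]
          rw [hA, hform ρ w₁, hw₁h]
          simp only [normSq_zero, ← htdef]
          nlinarith
        have hfr1 : 0 ≤ fr 1 := by
          rw [hfr_eq 1]
          have hone : w₁ + ((1:ℝ):ℂ) • d = v₀ := by
            rw [hd]
            simp
          rw [hone, hA, hform ρ v₀, hhv₀, hcreal]
          have h2 : (star v₀ ⬝ᵥ M *ᵥ v₀).re = c := by rw [hv₀Mv₀, hcreal]; simp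
          rw [h2, Complex.normSq_ofReal, ← htdef]
          nlinarith
        obtain ⟨τ, hτmem, hτ⟩ := intermediate_value_Icc zero_le_one hcont.continuousOn ⟨hfr0, hfr1⟩
        set u : Fin n → ℂ := w₁ + (τ:ℂ) • d with hu
        have huform : star u ⬝ᵥ A *ᵥ u = 0 := by
          rw [herm_form_real (hQH ρ) u]
          rw [show (star u ⬝ᵥ (Q ρ) *ᵥ u) = star u ⬝ᵥ A *ᵥ u from rfl, ← hfr_eq τ, hτ]
          simp
        have hu0 : u ≠ 0 := by
          have hdotu : star h ⬝ᵥ u = (τ:ℂ) * cC := by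
            rw [hu, dotProduct_add, dotProduct_smul, hw₁h, hd, dotProduct_sub, hhv₀, hw₁h]
            simp [smul_eq_mul]
          by_cases hτ0 : τ = 0
          · rw [hu, hτ0]
            simpa using hw₁0
          · intro h0
            rw [h0] at hdotu
            simp only [dotProduct_zero] at hdotu
            rcases mul_eq_zero.mp hdotu.symm with h1 | h2
            · exact hτ0 (by exact_mod_cast h1)
            · rw [hcreal] at h2
              exact hcpos.ne' (by exact_mod_cast h2)
        set r : ℝ := (star u ⬝ᵥ u).re with hr
        have hrpos : 0 < r := self_dot_pos hu0
        have hru : star u ⬝ᵥ u = ((r:ℝ):ℂ) := self_dot_real u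
        set q : ℝ := (Real.sqrt r)⁻¹ with hqdef
        have hsq : Real.sqrt r ≠ 0 := by positivity
        have hqq : q * (q * r) = 1 := by
          rw [hqdef]
          rw [← Real.mul_self_sqrt hrpos.le]
          field_simp
          rw [Real.sqrt_sq (Real.sqrt_nonneg _)]
        refine ⟨((q:ℝ):ℂ) • u, ?_, ?_⟩
        · rw [star_smul, smul_dotProduct, dotProduct_smul, hru]
          simp only [Complex.star_def, Complex.conj_ofReal, smul_eq_mul]
          rw [← Complex.ofReal_mul, ← Complex.ofReal_mul, hqq, Complex.ofReal_one]
        · rw [show ((Q ρ).mulVec (((q:ℝ):ℂ) • u)) = A *ᵥ (((q:ℝ):ℂ) • u) from rfl,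
            star_smul, smul_dotProduct, mulVec_smul, dotProduct_smul, huform]
          simp
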